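/- Fix an integer N ≥ 0 and let A be the (N+1) × (N+1) Hilbert matrix over ℝ, with entries (indexed by i, j ∈ {0, 1, …, N}) A_{i,j} = 1/(i + j + 1). Then A is invertible, and its inverse B = A⁻¹ has entries B_{i,j} = (−1)^{i+j} · (i + j + 1) · C(N + 1 + i, N − j) · C(N + 1 + j, N − i) · C(i + j, i)², where C(·,·) denotes the binomial coefficient; that is, A·B = I and B·A = I. -/

import Mathlib

open Matrix


open Finset Polynomial Nat

lemma prodAddNat (i : ℕ) : ∀ n : ℕ, (∏ l ∈ range n, (i + l + 1)) * i ! = (i + n)!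
  | 0 => by simp
  | n+1 => by
    rw [prod_range_succ, mul_right_comm, prodAddNat i n]
    rw [show i + (n+1) = (i+n)+1 by ring, Nat.factorial_succ]
    ring

lemma prodAdd (i n : ℕ) : ∏ l ∈ range n, ((i:ℝ) + l + 1) = (i+n)! / i ! := by
  have h : ((∏ l ∈ range n, (i + l + 1) : ℕ) : ℝ) * (i ! : ℝ) = ((i+n)! : ℝ) := by
    rw [← Nat.cast_mul, prodAddNat i n]
  push_cast at h
  rw [eq_div_iff (by positivity : ((i ! : ℝ)) ≠ 0)]
  exact h

lemma prodOnePlus (m : ℕ) : ∏ t ∈ range m, ((t:ℝ) + 1) = m ! := by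
  have : ((∏ t ∈ range m, (t + 1) : ℕ) : ℝ) = (m ! : ℝ) := by
    rw [Finset.prod_range_add_one_eq_factorial]
  push_cast at this
  exact this

lemma prodSub (n k : ℕ) (hk : k < n) :
    ∏ l ∈ (range n).erase k, ((l:ℝ) - k) = (-1)^k * k ! * (n-1-k)! := by
  have hsplit : (range n).erase k = range k ∪ Ico (k+1) n := by
    ext x; simp [Finset.mem_Ico, Finset.mem_range, Finset.mem_erase]; omega
  have hdisj : Disjoint (range k) (Ico (k+1) n) := by
    simp [Finset.disjoint_left, Finset.mem_Ico, Finset.mem_range]; omega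
  rw [hsplit, prod_union hdisj]
  have h1 : ∏ l ∈ range k, ((l:ℝ) - k) = (-1)^k * k ! := by
    rw [← Finset.prod_range_reflect (fun l => ((l:ℝ) - k)) k]
    have : ∀ l ∈ range k, ((↑(k - 1 - l) : ℝ) - k) = -((l:ℝ)+1) := by
      intro l hl; simp only [mem_range] at hl
      have h' : (k - 1 - l : ℕ) = k - (l+1) := by omega
      rw [h', Nat.cast_sub (by omega)]
      push_cast; ring
    rw [prod_congr rfl this]
    rw [prod_congr rfl (fun l _ => by ring : ∀ l ∈ range k, -((l:ℝ)+1) = (-1) * ((l:ℝ)+1))]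
    rw [prod_mul_distrib, prod_const, card_range, prodOnePlus]
  have h2 : ∏ l ∈ Ico (k+1) n, ((l:ℝ) - k) = (n-1-k)! := by
    rw [Finset.prod_Ico_eq_prod_range]
    have : ∀ t ∈ range (n - (k+1)), ((↑(k+1+t) : ℝ) - k) = (t:ℝ)+1 := by
      intro t _; push_cast; ring
    rw [prod_congr rfl this, prodOnePlus, show n - (k+1) = n - 1 - k by omega]
  rw [h1, h2]

noncomputable def Bf (N a b : ℕ) : ℝ :=
  (-1:ℝ)^(a+b) * (a+b+1) * (Nat.choose (N+1+a) (N-b)) * (Nat.choose (N+1+b) (N-a))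
    * ((Nat.choose (a+b) a : ℝ))^2

lemma residue (N j k : ℕ) (hj : j ≤ N) (hk : k ≤ N) :
    ((-1:ℝ)^(N-j) * ((N+j+1)! : ℝ) / (((j)! : ℝ)^2 * ((N-j)! : ℝ)))
      * ((-1:ℝ)^N * (((k+N+1)! : ℝ) / ((k ! : ℝ) * ((k:ℝ)+1+j))))
    = Bf N k j * ((-1:ℝ)^k * (k ! : ℝ) * ((N-k)! : ℝ)) := by
  have hc1 : ((Nat.choose (N+1+k) (N-j)) : ℝ) = ((N+1+k)! : ℝ) / (((N-j)! : ℝ) * ((k+1+j)! : ℝ)) := by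
    rw [Nat.cast_choose ℝ (by omega : N - j ≤ N+1+k), show N+1+k - (N-j) = k+1+j by omega]
  have hc2 : ((Nat.choose (N+1+j) (N-k)) : ℝ) = ((N+1+j)! : ℝ) / (((N-k)! : ℝ) * ((k+1+j)! : ℝ)) := by
    rw [Nat.cast_choose ℝ (by omega : N - k ≤ N+1+j), show N+1+j - (N-k) = k+1+j by omega]
  have hc3 : ((Nat.choose (k+j) k) : ℝ) = ((k+j)! : ℝ) / ((k ! : ℝ) * (j ! : ℝ)) := by
    rw [Nat.cast_choose ℝ (by omega : k ≤ k+j), show k+j - k = j by omega]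
  have s1 : ((-1:ℝ))^(N-j) = (-1:ℝ)^N * (-1:ℝ)^j := by
    have h1 : ((-1:ℝ))^(N-j) * ((-1:ℝ)^j * (-1:ℝ)^j) = ((-1:ℝ))^(N-j) := by
      rw [← pow_add, ← two_mul, pow_mul]; norm_num
    have h2 : ((-1:ℝ))^(N-j) * (-1:ℝ)^j = (-1:ℝ)^N := by
      rw [← pow_add]; congr 1; omega
    calc ((-1:ℝ))^(N-j) = ((-1:ℝ))^(N-j) * (-1:ℝ)^j * (-1:ℝ)^j := by rw [mul_assoc, h1]
    _ = (-1:ℝ)^N * (-1:ℝ)^j := by rw [h2]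
  have hfac : ((k+1+j)! : ℝ) = ((k:ℝ)+1+j) * ((k+j)! : ℝ) := by
    rw [show k+1+j = (k+j)+1 by ring, Nat.factorial_succ]
    push_cast; ring
  have e1 : ((N+j+1)! : ℝ) = ((N+1+j)! : ℝ) := by norm_num [show N+j+1 = N+1+j by ring]
  have e2 : ((k+N+1)! : ℝ) = ((N+1+k)! : ℝ) := by norm_num [show k+N+1 = N+1+k by ring]
  have nz1 : ((j)! : ℝ) ≠ 0 := by positivity
  have nz2 : ((k)! : ℝ) ≠ 0 := by positivity
  have nz3 : ((N-j)! : ℝ) ≠ 0 := by positivity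
  have nz4 : ((N-k)! : ℝ) ≠ 0 := by positivity
  have nz5 : ((k:ℝ)+1+j) ≠ 0 := by positivity
  have nz6 : ((k+j)! : ℝ) ≠ 0 := by positivity
  rw [Bf, hc1, hc2, hc3, s1, pow_add, e1, e2, hfac]
  field_simp
  ring_nf
  simp only [show ∀ m:ℕ, ((-1:ℝ))^(m*2) = 1 from fun m => by rw [mul_comm, pow_mul]; norm_num]


lemma prodEraseFin (N : ℕ) (k : Fin (N+1)) (g : ℕ → ℝ) :
    ∏ l ∈ Finset.univ.erase k, g (l:ℕ) = ∏ l ∈ (range (N+1)).erase (k:ℕ), g l := by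
  have himg : ((Finset.univ.erase k).image Fin.val) = (range (N+1)).erase (k:ℕ) := by
    ext y
    simp only [Finset.mem_image, Finset.mem_erase, Finset.mem_univ, and_true, Finset.mem_range]
    constructor
    · rintro ⟨a, ha, rfl⟩
      exact ⟨fun h => ha (Fin.val_injective h), a.isLt⟩
    · rintro ⟨hne, hlt⟩
      exact ⟨⟨y, hlt⟩, fun h => hne (congrArg Fin.val h), rfl⟩
  rw [← himg, Finset.prod_image (fun a _ b _ h => Fin.val_injective h)]

lemma key (N : ℕ) (i j : Fin (N+1)) :
    ∑ k : Fin (N+1), (1 / (((i:ℕ):ℝ) + ((k:ℕ):ℝ) + 1)) * Bf N (k:ℕ) (j:ℕ)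
      = if i = j then 1 else 0 := by
  classical
  set x : ℝ := ((i:ℕ):ℝ) with hx
  set v : Fin (N+1) → ℝ := fun k => -(((k:ℕ):ℝ)+1) with hv
  have hvinj : Set.InjOn v (Finset.univ : Finset (Fin (N+1))) := by
    intro a _ b _ h
    simp only [hv, neg_inj, add_left_inj, Nat.cast_inj] at h
    exact Fin.val_injective h
  set D : ℝ := (-1:ℝ)^(N-(j:ℕ)) * ((N+(j:ℕ)+1)! : ℝ) / ((((j:ℕ))! : ℝ)^2 * ((N-(j:ℕ))! : ℝ)) with hD
  set P : ℝ[X] := C D * ∏ m ∈ Finset.univ.erase j, (X - C (((m:ℕ):ℝ))) with hP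
  have hcard : (Finset.univ : Finset (Fin (N+1))).card = N+1 := by simp
  have hdeg : P.degree < ((Finset.univ : Finset (Fin (N+1))).card : WithBot ℕ) := by
    rw [hcard]
    apply lt_of_le_of_lt (Polynomial.degree_mul_le _ _)
    have h2 : (∏ m ∈ Finset.univ.erase j, (X - C (((m:ℕ):ℝ)))).degree = (N : WithBot ℕ) := by
      rw [Polynomial.degree_prod]
      simp only [Polynomial.degree_X_sub_C, Finset.sum_const, Finset.card_erase_of_mem
        (Finset.mem_univ j), hcard, nsmul_eq_mul, mul_one]
      rfl
    rw [h2]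
    calc (C D).degree + (N : WithBot ℕ) ≤ 0 + (N : WithBot ℕ) := by
          exact add_le_add Polynomial.degree_C_le le_rfl
      _ = (N : WithBot ℕ) := zero_add _
      _ < ((N+1 : ℕ) : WithBot ℕ) := by exact_mod_cast Nat.lt_succ_self N
  have hinterp := Lagrange.eq_interpolate (s := Finset.univ) (v := v) hvinj hdeg
  have heval := congrArg (Polynomial.eval x) hinterp
  rw [Lagrange.interpolate_apply, Polynomial.eval_finset_sum] at heval
  simp only [Polynomial.eval_mul, Polynomial.eval_C, Lagrange.basis, Polynomial.eval_prod,
    Lagrange.basisDivisor, Polynomial.eval_sub, Polynomial.eval_X] at heval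
  set Mfull : ℝ := ∏ l ∈ (Finset.univ : Finset (Fin (N+1))), (x - v l) with hM
  have hMpos : 0 < Mfull := by
    apply Finset.prod_pos
    intro l _
    have h : x - v l = ((i:ℕ):ℝ) + ((l:ℕ):ℝ) + 1 := by simp only [hv, hx]; ring
    rw [h]; positivity
  have claim1 : ∀ k : Fin (N+1),
      P.eval (v k) * ∏ l ∈ Finset.univ.erase k, ((v k - v l)⁻¹ * (x - v l))
        = Mfull * ((1 / (x + (k:ℕ) + 1)) * Bf N (k:ℕ) (j:ℕ)) := by
    intro k
    have hj' : (j:ℕ) ≤ N := by omega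
    have hk' : (k:ℕ) ≤ N := by omega
    have hb : ∏ l ∈ Finset.univ.erase k, ((v k - v l)⁻¹ * (x - v l))
        = (∏ l ∈ Finset.univ.erase k, (v k - v l))⁻¹ * ∏ l ∈ Finset.univ.erase k, (x - v l) := by
      rw [Finset.prod_mul_distrib, ← Finset.prod_inv_distrib]
    have hsub : ∏ l ∈ Finset.univ.erase k, (v k - v l)
        = (-1:ℝ)^(k:ℕ) * (((k:ℕ))! : ℝ) * ((N-(k:ℕ))! : ℝ) := by
      have h1 : ∀ l ∈ Finset.univ.erase k, v k - v l = ((l:ℕ):ℝ) - ((k:ℕ):ℝ) := by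
        intro l _; simp only [hv]; ring
      rw [Finset.prod_congr rfl h1, prodEraseFin N k (fun l => (l:ℝ) - ((k:ℕ):ℝ)),
        prodSub (N+1) (k:ℕ) k.isLt, show N+1-1-(k:ℕ) = N-(k:ℕ) by omega]
    have hxk : x - v k = x + (k:ℕ) + 1 := by simp only [hv]; ring
    have hxkpos : (0:ℝ) < x + (k:ℕ) + 1 := by rw [hx]; positivity
    have hxprod : ∏ l ∈ Finset.univ.erase k, (x - v l) = Mfull * (1/(x + (k:ℕ) + 1)) := by
      have h0 := Finset.prod_erase_mul Finset.univ (fun l => x - v l) (Finset.mem_univ k)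
      rw [hxk, ← hM] at h0
      field_simp
      linarith [h0]
    have hPv : P.eval (v k) = D * ((-1:ℝ)^N * ((((k:ℕ)+N+1)! : ℝ)
        / ((((k:ℕ))! : ℝ) * (((k:ℕ):ℝ) + 1 + ((j:ℕ):ℝ))))) := by
      rw [hP]
      simp only [Polynomial.eval_mul, Polynomial.eval_C, Polynomial.eval_prod,
        Polynomial.eval_sub, Polynomial.eval_X]
      congr 1
      have hterm : ∀ m ∈ Finset.univ.erase j, v k - ((m:ℕ):ℝ)
          = (-1) * (((k:ℕ):ℝ) + ((m:ℕ):ℝ) + 1) := by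
        intro m _; simp only [hv]; ring
      rw [Finset.prod_congr rfl hterm, Finset.prod_mul_distrib, Finset.prod_const,
        Finset.card_erase_of_mem (Finset.mem_univ j), hcard, show N+1-1 = N by omega]
      rw [prodEraseFin N j (fun m => ((k:ℕ):ℝ) + (m:ℝ) + 1)]
      have hjmem : (j:ℕ) ∈ range (N+1) := by simp only [Finset.mem_range]; omega
      have hful := Finset.prod_erase_mul (range (N+1)) (fun m => ((k:ℕ):ℝ) + (m:ℝ) + 1) hjmem
      rw [prodAdd (k:ℕ) (N+1), show (k:ℕ)+(N+1) = (k:ℕ)+N+1 by omega] at hful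
      have hkj : (0:ℝ) < ((k:ℕ):ℝ) + (j:ℕ) + 1 := by positivity
      have : ∏ m ∈ (range (N+1)).erase (j:ℕ), (((k:ℕ):ℝ) + (m:ℝ) + 1)
          = ((((k:ℕ)+N+1)! : ℝ) / ((((k:ℕ))! : ℝ))) / (((k:ℕ):ℝ) + (j:ℕ) + 1) := by
        rw [eq_div_iff (ne_of_gt hkj)]
        exact hful
      rw [this]
      have nzk : ((((k:ℕ))! : ℝ)) ≠ 0 := by positivity
      have hkj1 : (((k:ℕ):ℝ) + 1 + ((j:ℕ):ℝ)) = (((k:ℕ):ℝ) + ((j:ℕ):ℝ) + 1) := by ring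
      rw [hkj1, div_div]
    have hres := residue N (j:ℕ) (k:ℕ) hj' hk'
    rw [← hD] at hres
    have hQne : ((-1:ℝ)^(k:ℕ) * (((k:ℕ))! : ℝ) * ((N-(k:ℕ))! : ℝ)) ≠ 0 := by
      apply mul_ne_zero (mul_ne_zero (pow_ne_zero _ (by norm_num)) _) <;> positivity
    rw [hPv, hb, hsub, hxprod, hres]
    field_simp
  have claim2 : P.eval x = Mfull * (if i = j then 1 else 0) := by
    rw [hP]
    simp only [Polynomial.eval_mul, Polynomial.eval_C, Polynomial.eval_prod,
      Polynomial.eval_sub, Polynomial.eval_X]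
    by_cases hij : i = j
    · subst hij
      simp only [if_pos rfl, ↓reduceIte, mul_one]
      have hterm : ∀ m ∈ Finset.univ.erase i, x - ((m:ℕ):ℝ) = (-1) * (((m:ℕ):ℝ) - ((i:ℕ):ℝ)) := by
        intro m _; rw [hx]; ring
      rw [Finset.prod_congr rfl hterm, Finset.prod_mul_distrib, Finset.prod_const,
        Finset.card_erase_of_mem (Finset.mem_univ i), hcard]
      rw [prodEraseFin N i (fun m => ((m:ℕ):ℝ) - ((i:ℕ):ℝ)), prodSub (N+1) (i:ℕ) i.isLt,
        show N+1-1-(i:ℕ) = N-(i:ℕ) by omega]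
      have hMval : Mfull = (((i:ℕ)+N+1)! : ℝ) / (((i:ℕ))! : ℝ) := by
        rw [hM]
        calc ∏ l : Fin (N+1), (x - v l) = ∏ l : Fin (N+1), (((i:ℕ):ℝ) + (l:ℕ) + 1) :=
              Finset.prod_congr rfl (fun l _ => by simp only [hv, hx]; ring)
          _ = ∏ l ∈ range (N+1), (((i:ℕ):ℝ) + l + 1) := Fin.prod_univ_eq_prod_range (fun l => (((i:ℕ):ℝ) + l + 1)) (N+1)
          _ = _ := by rw [prodAdd (i:ℕ) (N+1), show (i:ℕ)+(N+1) = (i:ℕ)+N+1 by omega]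
      have hfe : ((N+(i:ℕ)+1)! : ℝ) = (((i:ℕ)+N+1)! : ℝ) := by
        norm_num [show N+(i:ℕ)+1 = (i:ℕ)+N+1 by omega]
      have s1 : ((-1:ℝ))^(N-(i:ℕ)) = (-1:ℝ)^N * (-1:ℝ)^(i:ℕ) := by
        have h1 : ((-1:ℝ))^(N-(i:ℕ)) * ((-1:ℝ)^(i:ℕ) * (-1:ℝ)^(i:ℕ)) = ((-1:ℝ))^(N-(i:ℕ)) := by
          rw [← pow_add, ← two_mul, pow_mul]; norm_num
        have h2 : ((-1:ℝ))^(N-(i:ℕ)) * (-1:ℝ)^(i:ℕ) = (-1:ℝ)^N := by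
          rw [← pow_add]; congr 1; omega
        calc ((-1:ℝ))^(N-(i:ℕ)) = ((-1:ℝ))^(N-(i:ℕ)) * (-1:ℝ)^(i:ℕ) * (-1:ℝ)^(i:ℕ) := by
              rw [mul_assoc, h1]
          _ = (-1:ℝ)^N * (-1:ℝ)^(i:ℕ) := by rw [h2]
      have nz1 : (((i:ℕ))! : ℝ) ≠ 0 := by positivity
      have nz2 : ((N-(i:ℕ))! : ℝ) ≠ 0 := by positivity
      rw [hMval, hD, hfe, s1, show N+1-1 = N by omega]
      field_simp
      ring_nf
      simp only [show ∀ m:ℕ, ((-1:ℝ))^(m*2) = 1 from fun m => by rw [mul_comm, pow_mul]; norm_num]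
      ring
    · rw [if_neg hij, mul_zero]
      have hmem : i ∈ Finset.univ.erase j := Finset.mem_erase.mpr ⟨hij, Finset.mem_univ i⟩
      rw [Finset.prod_eq_zero hmem (by rw [hx]; ring), mul_zero]
  have hMne : Mfull ≠ 0 := ne_of_gt hMpos
  apply mul_left_cancel₀ hMne
  rw [Finset.mul_sum]
  have : ∀ k ∈ (Finset.univ : Finset (Fin (N+1))),
      Mfull * ((1 / (((i:ℕ):ℝ) + ((k:ℕ):ℝ) + 1)) * Bf N (k:ℕ) (j:ℕ))
        = P.eval (v k) * ∏ l ∈ Finset.univ.erase k, ((v k - v l)⁻¹ * (x - v l)) := by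
    intro k _
    rw [claim1 k]
  rw [Finset.sum_congr rfl this, ← heval, claim2]

lemma Bf_symm (N a b : ℕ) : Bf N a b = Bf N b a := by
  unfold Bf
  rw [show b+a = a+b by omega]
  have : Nat.choose (a+b) a = Nat.choose (a+b) b := by
    rw [← Nat.choose_symm (by omega : a ≤ a+b), show a+b-a = b by omega]
  rw [this]
  ring


/-- The (N+1)×(N+1) Hilbert matrix is invertible, with inverse given by the classical
closed-form expression in terms of binomial coefficients. -/
theorem hilbert_matrix_inverse
    (N : ℕ)
    (A B : Matrix (Fin (N + 1)) (Fin (N + 1)) ℝ)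
    (hA : ∀ i j : Fin (N + 1), A i j = 1 / ((i : ℕ) + (j : ℕ) + 1))
    (hB : ∀ i j : Fin (N + 1),
      B i j = (-1 : ℝ) ^ ((i : ℕ) + (j : ℕ)) * ((i : ℕ) + (j : ℕ) + 1)
        * (Nat.choose (N + 1 + (i : ℕ)) (N - (j : ℕ)))
        * (Nat.choose (N + 1 + (j : ℕ)) (N - (i : ℕ)))
        * ((Nat.choose ((i : ℕ) + (j : ℕ)) (i : ℕ)) : ℝ) ^ 2) :
    IsUnit A ∧ A * B = 1 ∧ B * A = 1 := by
  have hBf : ∀ a b : Fin (N+1), B a b = Bf N (a:ℕ) (b:ℕ) := by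
    intro a b; rw [hB a b]; unfold Bf; norm_num
  have hAB : A * B = 1 := by
    ext a b
    rw [Matrix.mul_apply, Matrix.one_apply]
    calc ∑ k, A a k * B k b
        = ∑ k : Fin (N+1), (1 / (((a:ℕ):ℝ) + ((k:ℕ):ℝ) + 1)) * Bf N (k:ℕ) (b:ℕ) := by
          apply Finset.sum_congr rfl
          intro k _
          rw [hA a k, hBf k b]
      _ = if a = b then 1 else 0 := key N a b
  have hBA : B * A = 1 := by
    ext a b
    rw [Matrix.mul_apply, Matrix.one_apply]
    have hk := key N b a
    calc ∑ k, B a k * A k b = ∑ k : Fin (N+1), (1 / (((b:ℕ):ℝ) + ((k:ℕ):ℝ) + 1)) * Bf N (k:ℕ) (a:ℕ) := by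
          apply Finset.sum_congr rfl
          intro k _
          rw [hBf a k, hA k b, Bf_symm N (a:ℕ) (k:ℕ)]
          ring
      _ = if b = a then 1 else 0 := hk
      _ = if a = b then 1 else 0 := by
          by_cases h : a = b
          · simp [h]
          · rw [if_neg (fun hh : b = a => h hh.symm), if_neg h]
  exact ⟨(Matrix.isUnit_iff_isUnit_det A).mpr (Matrix.isUnit_det_of_right_inverse hAB), hAB, hBA⟩
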